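/- For every real number α > 0, the function χ satisfies: χ′(t) < 0 and χ(t) > 1/α for all t ∈ (−∞, 0); moreover χ(t) tends to 1/α as t → 0⁻ (so inf_{t<0} χ(t) = 1/α). -/

import Mathlib

open Filter

/-- For a real number `α > 0`, define
`χ(t) = (1/α² − 1 + e^t − (1/α + 1)·t)/(1/α + 1 − e^t)` on `(−∞, 0)`.
Then `χ′(t) < 0` and `χ(t) > 1/α` for all `t < 0`; moreover `χ(t) → 1/α`
as `t → 0⁻` (so `inf_{t<0} χ(t) = 1/α`). -/
theorem stmt_3 (α : ℝ) (hα : 0 < α) (χ : ℝ → ℝ)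
    (hχ : ∀ s, χ s =
      (1 / α ^ 2 - 1 + Real.exp s - (1 / α + 1) * s) / (1 / α + 1 - Real.exp s)) :
    (∀ t < (0 : ℝ), deriv χ t < 0 ∧ 1 / α < χ t) ∧
    Tendsto χ (nhdsWithin 0 (Set.Iio 0)) (nhds (1 / α)) := by
  have hfun : χ = fun s =>
      (1 / α ^ 2 - 1 + Real.exp s - (1 / α + 1) * s) / (1 / α + 1 - Real.exp s) :=
    funext hχ
  subst hfun
  have ha : 0 < 1 / α := by positivity
  constructor
  · intro t ht
    have het : Real.exp t < 1 := by
      have := Real.exp_lt_exp.2 ht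
      simpa using this
    have het0 : 0 < Real.exp t := Real.exp_pos t
    have hden : 0 < 1 / α + 1 - Real.exp t := by linarith
    have h1 : HasDerivAt (fun s => 1 / α ^ 2 - 1 + Real.exp s - (1 / α + 1) * s)
        (Real.exp t - (1 / α + 1)) t := by
      have := ((hasDerivAt_const t (1 / α ^ 2 - 1)).fun_add (Real.hasDerivAt_exp t)).fun_sub
        ((hasDerivAt_id t).const_mul (1 / α + 1))
      simpa using this
    have h2 : HasDerivAt (fun s => 1 / α + 1 - Real.exp s) (-Real.exp t) t := by
      simpa using (hasDerivAt_const t (1 / α + 1)).fun_sub (Real.hasDerivAt_exp t)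
    have hD := h1.fun_div h2 (ne_of_gt hden)
    have hkey : Real.exp t - 1 ≤ t * Real.exp t := by
      have h := Real.add_one_le_exp (-t)
      have h2 : (-t + 1) * Real.exp t ≤ Real.exp (-t) * Real.exp t :=
        mul_le_mul_of_nonneg_right h het0.le
      rw [← Real.exp_add, neg_add_cancel, Real.exp_zero] at h2
      nlinarith
    have hsq : 1 / α ^ 2 = (1 / α) * (1 / α) := by
      rw [sq, ← one_div_mul_one_div]
    have hbpos : (0:ℝ) < 1 / α + 1 := by linarith
    have h3 : (1 / α + 1) * (Real.exp t - 1) ≤ (1 / α + 1) * (t * Real.exp t) :=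
      mul_le_mul_of_nonneg_left hkey hbpos.le
    have h4 : (1 / α + 1) * ((1 / α + 1) * (Real.exp t - 1)) ≤
        (1 / α + 1) * ((1 / α + 1) * (t * Real.exp t)) :=
      mul_le_mul_of_nonneg_left h3 hbpos.le
    have h5 : 0 < (1 / α + 1) * (1 / α) * (-t) * Real.exp t :=
      mul_pos (mul_pos (mul_pos hbpos ha) (neg_pos.2 ht)) het0
    constructor
    · rw [hD.deriv]
      apply div_neg_of_neg_of_pos
      · nlinarith [h4, h5, hsq]
      · positivity
    · rw [lt_div_iff₀ hden]
      have hlt : t + 1 < Real.exp t := by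
        have := Real.add_one_lt_exp (ne_of_lt ht)
        linarith
      nlinarith [hsq, mul_pos ha (by linarith : (0:ℝ) < Real.exp t - 1 - t)]
  · have hc : ContinuousAt (fun s =>
        (1 / α ^ 2 - 1 + Real.exp s - (1 / α + 1) * s) / (1 / α + 1 - Real.exp s)) 0 := by
      apply ContinuousAt.div
      · fun_prop
      · fun_prop
      · simp [Real.exp_zero]
        positivity
    have h0 : (1 / α ^ 2 - 1 + Real.exp 0 - (1 / α + 1) * 0) / (1 / α + 1 - Real.exp 0)
        = 1 / α := by
      rw [Real.exp_zero]
      field_simp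
      ring
    have := (hc.continuousWithinAt (s := Set.Iio 0)).tendsto
    rw [h0] at this
    exact this
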